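/- arXiv:0809.1901 — 2 statements merged into one kernel-verified Lean document; each statement's English description precedes it below -/
import Mathlib

section
/- Let T : X → Y be a bounded linear operator between Hilbert spaces. Then T is compact if and only if for every ε > 0 there exist a compact operator K_ε : X → Y and a constant C_ε > 0 such that ‖T h‖ ≤ ε‖h‖ + C_ε‖K_ε h‖ for all h ∈ X. -/
/-- A bounded linear operator `T` between complex Hilbert spaces is compact if and only if
for every `ε > 0` there exist a compact operator `K` and a constant `C > 0` with
`‖T h‖ ≤ ε ‖h‖ + C ‖K h‖` for all `h`. -/
theorem compact_iff_compactness_estimate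
    {X Y : Type*} [NormedAddCommGroup X] [InnerProductSpace ℂ X] [CompleteSpace X]
    [NormedAddCommGroup Y] [InnerProductSpace ℂ Y] [CompleteSpace Y]
    (T : X →L[ℂ] Y) :
    IsCompactOperator T ↔
      ∀ ε : ℝ, 0 < ε →
        ∃ (K : X →L[ℂ] Y) (C : ℝ), IsCompactOperator K ∧ 0 < C ∧
          ∀ h : X, ‖T h‖ ≤ ε * ‖h‖ + C * ‖K h‖ := by
  constructor
  · intro hT ε hε
    refine ⟨T, 1, hT, one_pos, fun h => ?_⟩
    have : 0 ≤ ε * ‖h‖ := mul_nonneg hε.le (norm_nonneg h)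
    linarith
  · intro H
    refine (isCompactOperator_iff_isCompact_closure_image_closedBall
      (T : X →ₗ[ℂ] Y) one_pos).mpr ?_
    refine TotallyBounded.isCompact_of_isClosed ?_ isClosed_closure
    refine TotallyBounded.closure ?_
    rw [Metric.totallyBounded_iff]
    intro ε hε
    obtain ⟨K, C, hK, hC, hTK⟩ := H (ε / 5) (by positivity)
    -- the image of the closed unit ball under K is totally bounded
    have hKtb : TotallyBounded ((K : X → Y) '' Metric.closedBall 0 1) := by
      obtain ⟨Kc, hKc, hsub⟩ := hK.image_closedBall_subset_compact 1
      exact hKc.totallyBounded.subset hsub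
    obtain ⟨t, hts, htf, htc⟩ := Metric.finite_approx_of_totallyBounded hKtb (ε / (5 * C))
      (by positivity)
    haveI := htf.to_subtype
    choose g hg1 hg2 using fun y : t => hts y.2
    refine ⟨Set.range (fun y : t => T (g y)), Set.finite_range _, ?_⟩
    rintro x ⟨h, hh, rfl⟩
    have hKh : (K : X → Y) h ∈ ⋃ y ∈ t, Metric.ball y (ε / (5 * C)) :=
      htc ⟨h, hh, rfl⟩
    simp only [Set.mem_iUnion] at hKh
    obtain ⟨y, hy, hball⟩ := hKh
    refine Set.mem_biUnion ⟨⟨y, hy⟩, rfl⟩ ?_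
    rw [Metric.mem_ball]
    have hgb : ‖g ⟨y, hy⟩‖ ≤ 1 := by
      have := hg1 ⟨y, hy⟩
      rwa [Metric.mem_closedBall, dist_zero_right] at this
    have hhb : ‖h‖ ≤ 1 := by rwa [Metric.mem_closedBall, dist_zero_right] at hh
    have hdist : dist (T h) (T (g ⟨y, hy⟩)) = ‖T (h - g ⟨y, hy⟩)‖ := by
      rw [dist_eq_norm, map_sub]
    have hest := hTK (h - g ⟨y, hy⟩)
    have hnorm : ‖h - g ⟨y, hy⟩‖ ≤ 2 := by
      calc ‖h - g ⟨y, hy⟩‖ ≤ ‖h‖ + ‖g ⟨y, hy⟩‖ := norm_sub_le _ _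
        _ ≤ 2 := by linarith
    have hKnorm : ‖K (h - g ⟨y, hy⟩)‖ < ε / (5 * C) := by
      rw [map_sub, hg2 ⟨y, hy⟩]
      rwa [Metric.mem_ball, dist_eq_norm] at hball
    have hCK : C * ‖K (h - g ⟨y, hy⟩)‖ < C * (ε / (5 * C)) :=
      mul_lt_mul_of_pos_left hKnorm hC
    have hCC : C * (ε / (5 * C)) = ε / 5 := by field_simp
    have : ‖T (h - g ⟨y, hy⟩)‖ < ε / 5 * 2 + ε / 5 := by
      have h1 : ε / 5 * ‖h - g ⟨y, hy⟩‖ ≤ ε / 5 * 2 :=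
        mul_le_mul_of_nonneg_left hnorm (by positivity)
      calc ‖T (h - g ⟨y, hy⟩)‖ ≤ ε / 5 * ‖h - g ⟨y, hy⟩‖ + C * ‖K (h - g ⟨y, hy⟩)‖ := hest
        _ < ε / 5 * 2 + ε / 5 := by linarith
    show dist (T h) (T (g ⟨y, hy⟩)) < ε
    rw [hdist]
    linarith
end

section
/- Let Ω be a convex domain in ℂⁿ and f : Δ → ∂Ω a non-constant holomorphic map from the open unit disc into the boundary of Ω. Then the convex hull of f(Δ) is contained in ∂Ω. -/
open Metric Finset

/-- Key lemma: a holomorphic map on the unit disc with values in the closure of an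
open convex set `Ω` which takes a value in `Ω` at one point takes values in `Ω`
everywhere on the disc. -/
lemma key_disc_lemma {n : ℕ} (Ω : Set (Fin n → ℂ)) (hΩopen : IsOpen Ω) (hΩconv : Convex ℝ Ω)
    (g : ℂ → (Fin n → ℂ)) (hg : DifferentiableOn ℂ g (Metric.ball 0 1))
    (hcl : ∀ z ∈ Metric.ball (0 : ℂ) 1, g z ∈ closure Ω)
    {z₀ z₁ : ℂ} (hz₀ : z₀ ∈ Metric.ball (0 : ℂ) 1) (hz₁ : z₁ ∈ Metric.ball (0 : ℂ) 1)
    (h₀ : g z₀ ∈ Ω) : g z₁ ∈ Ω := by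
  by_contra hmem
  obtain ⟨ℓ, hℓ⟩ := geometric_hahn_banach_open_point hΩconv hΩopen hmem
  set c : ℝ := ℓ (g z₁) with hc
  have hle : ∀ x ∈ closure Ω, ℓ x ≤ c := by
    intro x hx
    have hsub : closure Ω ⊆ {y | ℓ y ≤ c} :=
      closure_minimal (fun a ha => (hℓ a ha).le) (isClosed_le ℓ.continuous continuous_const)
    exact hsub hx
  set L : (Fin n → ℂ) →L[ℂ] ℂ := ℓ.extendTo𝕜'
  have hre : ∀ x, (L x).re = ℓ x := by
    intro x
    have h1 := ℓ.toLinearMap.extendTo𝕜'_apply_re (𝕜 := ℂ) x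
    rw [RCLike.re_to_complex] at h1
    exact h1
  set h : ℂ → ℂ := fun z => Complex.exp (L (g z)) with hh
  have hdh : DifferentiableOn ℂ h (Metric.ball 0 1) :=
    Complex.differentiable_exp.comp_differentiableOn
      (L.differentiable.comp_differentiableOn hg)
  have hnorm : ∀ z, ‖h z‖ = Real.exp (ℓ (g z)) := by
    intro z
    rw [hh]
    simp only [Complex.norm_exp, hre]
  have hmax : IsMaxOn (norm ∘ h) (Metric.ball 0 1) z₁ := by
    intro z hz
    simp only [Function.comp_apply, Set.mem_setOf_eq, hnorm]
    exact Real.exp_le_exp.2 (hle _ (hcl z hz))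
  have heq := Complex.norm_eqOn_of_isPreconnected_of_isMaxOn
    (convex_ball (0 : ℂ) 1).isPreconnected isOpen_ball hdh hz₁ hmax hz₀
  have heq' : Real.exp (ℓ (g z₀)) = Real.exp c := by
    simpa [Function.comp, Function.const, hnorm] using heq
  have : ℓ (g z₀) = c := Real.exp_injective heq'
  exact absurd this (ne_of_lt (hℓ _ h₀))

/-- If `Ω` is a convex domain in `ℂⁿ` and `f : Δ → ∂Ω` is a non-constant holomorphic map
from the open unit disc into the boundary of `Ω`, then the convex hull of `f(Δ)` is
contained in `∂Ω`. -/
theorem convexHull_image_subset_frontier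
    {n : ℕ} (Ω : Set (Fin n → ℂ)) (hΩopen : IsOpen Ω) (hΩne : Ω.Nonempty)
    (hΩconv : Convex ℝ Ω)
    (f : ℂ → (Fin n → ℂ)) (hf : DifferentiableOn ℂ f (Metric.ball 0 1))
    (hbd : ∀ z ∈ Metric.ball (0 : ℂ) 1, f z ∈ frontier Ω)
    (hnc : ¬ ∃ c : Fin n → ℂ, ∀ z ∈ Metric.ball (0 : ℂ) 1, f z = c) :
    convexHull ℝ (f '' Metric.ball (0 : ℂ) 1) ⊆ frontier Ω := by
  classical
  have hball0 : (0 : ℂ) ∈ Metric.ball (0 : ℂ) 1 := Metric.mem_ball_self one_pos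
  have hfcl : ∀ z ∈ Metric.ball (0 : ℂ) 1, f z ∈ closure Ω := fun z hz =>
    frontier_subset_closure (hbd z hz)
  intro p hp
  have hpcl : p ∈ closure Ω := by
    refine convexHull_min ?_ hΩconv.closure hp
    rintro _ ⟨z, hz, rfl⟩
    exact hfcl z hz
  rw [hΩopen.frontier_eq]
  refine ⟨hpcl, fun hpΩ => ?_⟩
  rw [_root_.convexHull_eq] at hp
  obtain ⟨ι, t, w, z, hw0, hw1, hz, hcm⟩ := hp
  have hex : ∀ i ∈ t, ∃ x, x ∈ Metric.ball (0 : ℂ) 1 ∧ f x = z i := by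
    intro i hi
    obtain ⟨x, hx, hfx⟩ := hz i hi
    exact ⟨x, hx, hfx⟩
  choose! ζ hζball hζeq using hex
  -- main induction: we can move the points one at a time to `0`
  have main : ∀ s : Finset ι, s ⊆ t →
      (∑ i ∈ t, w i • f (if i ∈ s then 0 else ζ i)) ∈ Ω := by
    intro s
    induction s using Finset.induction_on with
    | empty =>
      intro _
      have : (∑ i ∈ t, w i • f (if i ∈ (∅ : Finset ι) then 0 else ζ i)) = p := by
        rw [← hcm, Finset.centerMass_eq_of_sum_1 _ _ hw1]
        refine Finset.sum_congr rfl fun i hi => ?_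
        simp [hζeq i hi]
      rwa [this]
    | @insert a s ha ih =>
      intro hsub
      have hat : a ∈ t := hsub (Finset.mem_insert_self a s)
      have hst : s ⊆ t := fun x hx => hsub (Finset.mem_insert_of_mem hx)
      set g : ℂ → (Fin n → ℂ) :=
        fun zz => w a • f zz + ∑ i ∈ t.erase a, w i • f (if i ∈ s then 0 else ζ i) with hg
      have hsum_eq : ∀ zz : ℂ, g zz = ∑ i ∈ t, w i •
          f (if i = a then zz else if i ∈ s then 0 else ζ i) := by
        intro zz
        rw [hg]
        rw [← Finset.add_sum_erase _ _ hat]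
        simp only [if_pos rfl]
        congr 1
        refine Finset.sum_congr rfl fun i hi => ?_
        rw [if_neg (Finset.ne_of_mem_erase hi)]
      have hgd : DifferentiableOn ℂ g (Metric.ball 0 1) :=
        (hf.const_smul (w a)).add_const _
      have hgcl : ∀ zz ∈ Metric.ball (0 : ℂ) 1, g zz ∈ closure Ω := by
        intro zz hzz
        rw [hsum_eq zz]
        refine hΩconv.closure.sum_mem hw0 hw1 fun i hi => ?_
        by_cases hia : i = a
        · simp only [hia, if_pos rfl]
          exact hfcl zz hzz
        · rw [if_neg hia]
          by_cases his : i ∈ s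
          · rw [if_pos his]
            exact hfcl 0 hball0
          · rw [if_neg his]
            exact hfcl _ (hζball i hi)
      have hprev : g (ζ a) ∈ Ω := by
        have heq : g (ζ a) = ∑ i ∈ t, w i • f (if i ∈ s then 0 else ζ i) := by
          rw [hsum_eq]
          refine Finset.sum_congr rfl fun i hi => ?_
          by_cases hia : i = a
          · subst hia
            rw [if_pos rfl, if_neg ha]
          · rw [if_neg hia]
        rw [heq]
        exact ih hst
      have hnext : g 0 ∈ Ω :=
        key_disc_lemma Ω hΩopen hΩconv g hgd hgcl (hζball a hat) hball0 hprev
      have heq0 : g 0 = ∑ i ∈ t, w i • f (if i ∈ insert a s then 0 else ζ i) := by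
        rw [hsum_eq]
        refine Finset.sum_congr rfl fun i hi => ?_
        by_cases hia : i = a
        · subst hia
          simp [Finset.mem_insert_self]
        · rw [if_neg hia]
          by_cases his : i ∈ s
          · rw [if_pos his, if_pos (Finset.mem_insert_of_mem his)]
          · rw [if_neg his, if_neg (by simp [hia, his])]
      rwa [heq0] at hnext
  have hfinal := main t (le_refl t)
  have : (∑ i ∈ t, w i • f (if i ∈ t then 0 else ζ i)) = f 0 := by
    rw [Finset.sum_congr rfl fun i hi => by rw [if_pos hi]]
    rw [← Finset.sum_smul, hw1, one_smul]
  rw [this] at hfinal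
  have hfr := hbd 0 hball0
  rw [hΩopen.frontier_eq] at hfr
  exact hfr.2 hfinal
end
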